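/- Let n ≥ 2 and let (σ_H, g) be a normalized pair. Then g(a, b) = g(w(a), w(b)) · g(w(a), z(b)) · g(z(a), w(b)) for all a ∈ H(n) and b ∈ G(n−1). -/

import Mathlib

open scoped BigOperators

namespace FreeNilp

/-- Index set for pairs `(j,k)` with `j < k`. -/
abbrev PairIdx (n : ℕ) : Type := {p : Fin n × Fin n // p.1 < p.2}

/-- The free nilpotent group of class 2 and rank `n`, realized on
`ℤ^n × ℤ^{n(n-1)/2}`. -/
@[ext] structure G (n : ℕ) where
  u : Fin n → ℤ
  v : PairIdx n → ℤ

namespace G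

instance (n : ℕ) : Group (G n) where
  mul r s := ⟨fun i => r.u i + s.u i, fun p => r.v p + s.v p + r.u p.1.1 * s.u p.1.2⟩
  one := ⟨fun _ => 0, fun _ => 0⟩
  inv r := ⟨fun i => -r.u i, fun p => -r.v p + r.u p.1.1 * r.u p.1.2⟩
  mul_assoc r s t := by
    refine G.ext ?_ ?_ <;> funext x
    · show (r.u x + s.u x) + t.u x = r.u x + (s.u x + t.u x)
      ring
    · show (r.v x + s.v x + r.u x.1.1 * s.u x.1.2) + t.v x +
          (r.u x.1.1 + s.u x.1.1) * t.u x.1.2 =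
        r.v x + (s.v x + t.v x + s.u x.1.1 * t.u x.1.2) +
          r.u x.1.1 * (s.u x.1.2 + t.u x.1.2)
      ring
  one_mul r := by
    refine G.ext ?_ ?_ <;> funext x
    · show 0 + r.u x = r.u x
      ring
    · show 0 + r.v x + 0 * r.u x.1.2 = r.v x
      ring
  mul_one r := by
    refine G.ext ?_ ?_ <;> funext x
    · show r.u x + 0 = r.u x
      ring
    · show r.v x + 0 + r.u x.1.1 * 0 = r.v x
      ring
  inv_mul_cancel r := by
    refine G.ext ?_ ?_ <;> funext x
    · show -r.u x + r.u x = 0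
      ring
    · show (-r.v x + r.u x.1.1 * r.u x.1.2) + r.v x + -r.u x.1.1 * r.u x.1.2 = 0
      ring

@[simp] lemma mul_u {n : ℕ} (r s : G n) (i : Fin n) : (r * s).u i = r.u i + s.u i := rfl
@[simp] lemma mul_v {n : ℕ} (r s : G n) (p : PairIdx n) :
    (r * s).v p = r.v p + s.v p + r.u p.1.1 * s.u p.1.2 := rfl
@[simp] lemma one_u {n : ℕ} (i : Fin n) : (1 : G n).u i = 0 := rfl
@[simp] lemma one_v {n : ℕ} (p : PairIdx n) : (1 : G n).v p = 0 := rfl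
@[simp] lemma inv_u {n : ℕ} (r : G n) (i : Fin n) : (r⁻¹).u i = -r.u i := rfl
@[simp] lemma inv_v {n : ℕ} (r : G n) (p : PairIdx n) :
    (r⁻¹).v p = -r.v p + r.u p.1.1 * r.u p.1.2 := rfl

end G

/-- First-block coordinate `r_i`. -/
def uc {n : ℕ} (r : G n) (i : Fin n) : ℤ := r.u i

/-- Second-block coordinate `r_{jk}` (zero unless `j < k`). -/
def vc {n : ℕ} (r : G n) (j k : Fin n) : ℤ := if h : j < k then r.v ⟨(j, k), h⟩ else 0

/-- A multiplier (2-cocycle with values in the circle group) of a group. -/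
def IsMultiplier {Γ : Type*} [Group Γ] (σ : Γ → Γ → Circle) : Prop :=
  (∀ r s t : Γ, σ r s * σ (r * s) t = σ r (s * t) * σ s t) ∧
  ∀ r : Γ, σ r 1 = 1 ∧ σ 1 r = 1

/-- Similarity (cohomology) of multipliers. -/
def Similar {Γ : Type*} [Group Γ] (σ τ : Γ → Γ → Circle) : Prop :=
  ∃ β : Γ → Circle, ∀ r s : Γ, τ r s = β r * β s * (β (r * s))⁻¹ * σ r s

/-- The subgroup `H(n) ≅ ℤⁿ` of `G n`: only the coordinates `r_n` and `r_{jn}` may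
be nonzero. -/
def Hsub (n : ℕ) : Subgroup (G n) where
  carrier := {r | (∀ i : Fin n, (i : ℕ) + 1 < n → r.u i = 0) ∧
                  ∀ p : PairIdx n, (p.1.2 : ℕ) + 1 < n → r.v p = 0}
  one_mem' := ⟨fun _ _ => rfl, fun _ _ => rfl⟩
  mul_mem' := by
    rintro r s ⟨hr1, hr2⟩ ⟨hs1, hs2⟩
    refine ⟨fun i hi => ?_, fun p hp => ?_⟩
    · simp [hr1 i hi, hs1 i hi]
    · simp [hr2 p hp, hs2 p hp, hs1 p.1.2 hp]
  inv_mem' := by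
    rintro r ⟨hr1, hr2⟩
    refine ⟨fun i hi => ?_, fun p hp => ?_⟩
    · simp [hr1 i hi]
    · simp [hr2 p hp, hr1 p.1.2 hp]

/-- The subgroup `G(n-1)` of `G n`: the coordinates `r_n` and `r_{jn}` vanish. -/
def Gsub (n : ℕ) : Subgroup (G n) where
  carrier := {r | (∀ i : Fin n, (i : ℕ) + 1 = n → r.u i = 0) ∧
                  ∀ p : PairIdx n, (p.1.2 : ℕ) + 1 = n → r.v p = 0}
  one_mem' := ⟨fun _ _ => rfl, fun _ _ => rfl⟩
  mul_mem' := by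
    rintro r s ⟨hr1, hr2⟩ ⟨hs1, hs2⟩
    refine ⟨fun i hi => ?_, fun p hp => ?_⟩
    · simp [hr1 i hi, hs1 i hi]
    · simp [hr2 p hp, hs2 p hp, hs1 p.1.2 hp]
  inv_mem' := by
    rintro r ⟨hr1, hr2⟩
    refine ⟨fun i hi => ?_, fun p hp => ?_⟩
    · simp [hr1 i hi]
    · simp [hr2 p hp, hr1 p.1.2 hp]

lemma mem_Hsub_iff {n : ℕ} {r : G n} :
    r ∈ Hsub n ↔ (∀ i : Fin n, (i : ℕ) + 1 < n → r.u i = 0) ∧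
      ∀ p : PairIdx n, (p.1.2 : ℕ) + 1 < n → r.v p = 0 := Iff.rfl

lemma mem_Gsub_iff {n : ℕ} {r : G n} :
    r ∈ Gsub n ↔ (∀ i : Fin n, (i : ℕ) + 1 = n → r.u i = 0) ∧
      ∀ p : PairIdx n, (p.1.2 : ℕ) + 1 = n → r.v p = 0 := Iff.rfl

/-- `H(n)` is a normal subgroup; conjugation preserves it. -/
lemma conj_mem_Hsub {n : ℕ} (s : G n) {a : G n} (ha : a ∈ Hsub n) :
    s * a * s⁻¹ ∈ Hsub n := by
  obtain ⟨ha1, ha2⟩ := ha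
  refine ⟨fun i hi => ?_, fun p hp => ?_⟩
  · simp [ha1 i hi]
  · have hj : (p.1.1 : ℕ) + 1 < n := by
      have h2 : (p.1.1 : ℕ) < (p.1.2 : ℕ) := p.2
      omega
    simp [ha2 p hp, ha1 p.1.2 hp, ha1 p.1.1 hj]

/-- The action `α_b(a) = b a b⁻¹` of `G(n-1)` on `H(n)`. -/
def conjH {n : ℕ} (b : Gsub n) (a : Hsub n) : Hsub n :=
  ⟨(b : G n) * (a : G n) * (b : G n)⁻¹, conj_mem_Hsub _ a.2⟩

/-- The `H(n)`-part of the unique factorization `r = a·b`, `a ∈ H(n)`, `b ∈ G(n-1)`. -/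
def hpart {n : ℕ} (r : G n) : Hsub n :=
  ⟨⟨fun i => if (i : ℕ) + 1 = n then r.u i else 0,
    fun p => if (p.1.2 : ℕ) + 1 = n then r.v p else 0⟩, by
    refine ⟨fun i hi => ?_, fun p hp => ?_⟩
    · exact if_neg (by omega)
    · exact if_neg (by omega)⟩

/-- The `G(n-1)`-part of the unique factorization `r = a·b`. -/
def gpart {n : ℕ} (r : G n) : Gsub n :=
  ⟨⟨fun i => if (i : ℕ) + 1 = n then 0 else r.u i,
    fun p => if (p.1.2 : ℕ) + 1 = n then 0 else r.v p⟩, by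
    refine ⟨fun i hi => ?_, fun p hp => ?_⟩
    · exact if_pos hi
    · exact if_pos hp⟩

/-- `r` indeed factors as `hpart r * gpart r`. -/
lemma hpart_mul_gpart {n : ℕ} (r : G n) : ((hpart r : G n)) * (gpart r : G n) = r := by
  refine G.ext ?_ ?_ <;> funext x
  · show (if ((x : ℕ)) + 1 = n then r.u x else 0) + (if (x : ℕ) + 1 = n then 0 else r.u x) = r.u x
    split <;> ring
  · show (if ((x.1.2 : ℕ)) + 1 = n then r.v x else 0) +
      (if (x.1.2 : ℕ) + 1 = n then 0 else r.v x) +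
      (if ((x.1.1 : ℕ)) + 1 = n then r.u x.1.1 else 0) *
        (if (x.1.2 : ℕ) + 1 = n then 0 else r.u x.1.2) = r.v x
    have h2 : (x.1.1 : ℕ) < (x.1.2 : ℕ) := x.2
    have h3 : (x.1.2 : ℕ) < n := x.1.2.isLt
    rcases eq_or_ne ((x.1.2 : ℕ) + 1) n with h | h
    · rw [if_pos h, if_pos h, if_pos h, if_neg (by omega)]; ring
    · rw [if_neg h, if_neg h, if_neg h, if_neg (show ¬((x.1.1 : ℕ) + 1 = n) by omega)]
      ring

/-- An admissible pair `(σ_H, g)` (Mackey data with trivial multiplier on `G(n-1)`). -/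
structure AdmissiblePair (n : ℕ) (σH : Hsub n → Hsub n → Circle)
    (g : Hsub n → Gsub n → Circle) : Prop where
  multH : IsMultiplier σH
  g_one_right : ∀ a : Hsub n, g a 1 = 1
  g_one_left : ∀ b : Gsub n, g 1 b = 1
  g_add : ∀ (a a' : Hsub n) (b : Gsub n),
    g (a * a') b = σH (conjH b a) (conjH b a') * (σH a a')⁻¹ * (g a b * g a' b)
  g_mul : ∀ (a : Hsub n) (b b' : Gsub n), g a (b * b') = g (conjH b' a) b * g a b'

/-- An admissible triple `(σ_H, g, σ')`. -/
def AdmissibleTriple (n : ℕ) (σH : Hsub n → Hsub n → Circle)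
    (g : Hsub n → Gsub n → Circle) (σ' : Gsub n → Gsub n → Circle) : Prop :=
  AdmissiblePair n σH g ∧ IsMultiplier σ'

/-- The map `σ_n(a′b, ab′) = σ_H(a′, α_b(a)) g(a,b) σ′(b,b′)` defined via the unique
factorizations. -/
noncomputable def sigmaN {n : ℕ} (σH : Hsub n → Hsub n → Circle) (g : Hsub n → Gsub n → Circle)
    (σ' : Gsub n → Gsub n → Circle) (r s : G n) : Circle :=
  σH (hpart r) (conjH (gpart r) (hpart s)) * g (hpart s) (gpart r) *
    σ' (gpart r) (gpart s)

/-- The map `τ(a′b, ab′) = σ_H(a′, α_b(a)) g(a,b)` defined via the unique factorizations. -/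
noncomputable def tauN {n : ℕ} (σH : Hsub n → Hsub n → Circle) (g : Hsub n → Gsub n → Circle)
    (r s : G n) : Circle :=
  σH (hpart r) (conjH (gpart r) (hpart s)) * g (hpart s) (gpart r)

/-- The generator `u_i`. -/
def uE {n : ℕ} (i : Fin n) : G n := ⟨fun j => if j = i then 1 else 0, fun _ => 0⟩

/-- The generator `v_{jk}`. -/
def vE {n : ℕ} (j k : Fin n) : G n := ⟨fun _ => 0, fun p => if p.1 = (j, k) then 1 else 0⟩

/-- The last index `n` (i.e. `n-1` in `Fin n`). -/
def lastI (n : ℕ) (hn : 0 < n) : Fin n := ⟨n - 1, by omega⟩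

/-- `u_n` as an element of `H(n)`. -/
def unH {n : ℕ} (hn : 0 < n) : Hsub n :=
  ⟨uE (lastI n hn), by
    refine ⟨fun i hi => ?_, fun p hp => rfl⟩
    have h : i ≠ lastI n hn := by
      intro h; apply absurd hi; rw [h]; show ¬ (n - 1) + 1 < n; omega
    simp [uE, h]⟩

/-- `u_i` (for `i < n`) as an element of `G(n-1)`. -/
def uiG {n : ℕ} (i : Fin n) (hi : (i : ℕ) + 1 < n) : Gsub n :=
  ⟨uE i, by
    refine ⟨fun j hj => ?_, fun p hp => rfl⟩
    have h : j ≠ i := by intro h; rw [h] at hj; omega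
    simp [uE, h]⟩

/-- `v_{in}` (for `i < n`) as an element of `H(n)`. -/
def vinH {n : ℕ} (i : Fin n) (hi : (i : ℕ) + 1 < n) : Hsub n :=
  ⟨vE i (lastI n (by omega)), by
    refine ⟨fun j hj => rfl, fun p hp => ?_⟩
    have h : p.1 ≠ (i, lastI n (by omega)) := by
      intro h
      have h2 : (p.1.2 : ℕ) = n - 1 := by rw [h]; rfl
      omega
    simp [vE, h]⟩

/-- `v_{ij}` (for `j < n`) as an element of `G(n-1)`. -/
def vijG {n : ℕ} (i j : Fin n) (hj : (j : ℕ) + 1 < n) : Gsub n :=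
  ⟨vE i j, by
    refine ⟨fun k hk => rfl, fun p hp => ?_⟩
    have h : p.1 ≠ (i, j) := by
      intro h
      have h2 : (p.1.2 : ℕ) = (j : ℕ) := by rw [h]
      omega
    simp [vE, h]⟩

/-- The "word part" `w(a)` of `a ∈ H(n)`. -/
def wH {n : ℕ} (a : Hsub n) : Hsub n :=
  ⟨⟨(a : G n).u, fun _ => 0⟩,
    ⟨fun i hi => (mem_Hsub_iff.mp a.2).1 i hi, fun _ _ => rfl⟩⟩

/-- The "central part" `z(a)` of `a ∈ H(n)`. -/
def zH {n : ℕ} (a : Hsub n) : Hsub n :=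
  ⟨⟨fun _ => 0, (a : G n).v⟩,
    ⟨fun _ _ => rfl, fun p hp => (mem_Hsub_iff.mp a.2).2 p hp⟩⟩

/-- The "word part" `w(b)` of `b ∈ G(n-1)`. -/
def wG {n : ℕ} (b : Gsub n) : Gsub n :=
  ⟨⟨(b : G n).u, fun _ => 0⟩,
    ⟨fun i hi => (mem_Gsub_iff.mp b.2).1 i hi, fun _ _ => rfl⟩⟩

/-- The "central part" `z(b)` of `b ∈ G(n-1)`. -/
def zG {n : ℕ} (b : Gsub n) : Gsub n :=
  ⟨⟨fun _ => 0, (b : G n).v⟩,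
    ⟨fun _ _ => rfl, fun p hp => (mem_Gsub_iff.mp b.2).2 p hp⟩⟩

/-- `g(v_{in}, u_j)`, as a total function (equal to `1` outside the admissible range). -/
noncomputable def gvu {n : ℕ} (g : Hsub n → Gsub n → Circle) (i j : Fin n) : Circle :=
  if h : (i : ℕ) + 1 < n ∧ (j : ℕ) + 1 < n then g (vinH i h.1) (uiG j h.2) else 1

/-- `g(u_n, v_{ij})`, as a total function (equal to `1` outside the admissible range). -/
noncomputable def guv {n : ℕ} (g : Hsub n → Gsub n → Circle) (i j : Fin n) : Circle :=
  if h : (j : ℕ) + 1 < n then g (unH (by omega)) (vijG i j h) else 1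

/-- A normalized pair `(σ_H, g)`: admissible, with `σ_H` of the standard `λ`-form, and
`g(u_n, u_i) = 1` for all `1 ≤ i ≤ n-1`. -/
def Normalized {n : ℕ} (hn : 0 < n) (σH : Hsub n → Hsub n → Circle)
    (g : Hsub n → Gsub n → Circle) (lam : Fin n → Circle) : Prop :=
  AdmissiblePair n σH g ∧
  (∀ a' a : Hsub n, σH a' a =
    ∏ i ∈ Finset.univ.filter (fun i : Fin n => (i : ℕ) + 1 < n),
      lam i ^ (uc (a' : G n) (lastI n hn) * vc (a : G n) i (lastI n hn))) ∧
  ∀ (i : Fin n) (hi : (i : ℕ) + 1 < n), g (unH hn) (uiG i hi) = 1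

/-- The multiplier `σ_λ` of `G n` attached to a family of parameters
`λ_{i,jk} ∈ 𝕋` (`1 ≤ i ≤ k`, `1 ≤ j < k ≤ n`). -/
noncomputable def sigmaLam {n : ℕ} (lam : Fin n → Fin n → Fin n → Circle) (r s : G n) : Circle :=
  (∏ t ∈ Finset.univ.filter
      (fun t : Fin n × Fin n × Fin n => t.1 < t.2.1 ∧ t.2.1 < t.2.2),
    lam t.1 t.2.1 t.2.2 ^ (vc s t.2.1 t.2.2 * uc r t.1 + uc s t.2.2 * vc r t.1 t.2.1) *
    lam t.2.1 t.1 t.2.2 ^ (vc s t.1 t.2.2 * uc r t.2.1 +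
      uc s t.2.2 * (uc r t.1 * uc r t.2.1 - vc r t.1 t.2.1))) *
  ∏ p ∈ Finset.univ.filter (fun p : Fin n × Fin n => p.1 < p.2),
    lam p.1 p.1 p.2 ^ (vc s p.1 p.2 * uc r p.1 +
      uc s p.2 * (uc r p.1 * (uc r p.1 - 1) / 2)) *
    lam p.2 p.1 p.2 ^ (uc r p.2 * (vc s p.1 p.2 + uc r p.1 * uc s p.2) +
      uc r p.1 * (uc s p.2 * (uc s p.2 - 1) / 2))

/-- The extension of the parameter family to indices `i > k`, via
`λ_{k,ij} = λ_{i,jk}⁻¹ λ_{j,ik}` for `i < j < k`. -/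
noncomputable def lamExt {n : ℕ} (lam : Fin n → Fin n → Fin n → Circle) (i j k : Fin n) : Circle :=
  if i ≤ k then lam i j k else (lam j k i)⁻¹ * lam k j i

section Aux

variable {n : ℕ}

lemma conjH_u (b : Gsub n) (a : Hsub n) (i : Fin n) :
    ((conjH b a : Hsub n) : G n).u i = (a : G n).u i := by
  show ((b : G n).u i + (a : G n).u i) + (-(b : G n).u i) = (a : G n).u i
  ring

lemma conjH_central_a (b : Gsub n) (a : Hsub n) (ha : ∀ i, (a : G n).u i = 0) :
    conjH b a = a := by
  apply Subtype.ext
  refine G.ext ?_ ?_ <;> funext x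
  · show ((b : G n).u x + (a : G n).u x) + (-(b : G n).u x) = (a : G n).u x
    ring
  · show ((b : G n).v x + (a : G n).v x + (b : G n).u x.1.1 * (a : G n).u x.1.2)
        + (-(b : G n).v x + (b : G n).u x.1.1 * (b : G n).u x.1.2)
        + (((b : G n).u x.1.1 + (a : G n).u x.1.1)) * (-(b : G n).u x.1.2) = (a : G n).v x
    rw [ha x.1.1, ha x.1.2]
    ring

lemma conjH_central_b (b : Gsub n) (a : Hsub n) (hb : ∀ i, (b : G n).u i = 0) :
    conjH b a = a := by
  apply Subtype.ext
  refine G.ext ?_ ?_ <;> funext x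
  · show ((b : G n).u x + (a : G n).u x) + (-(b : G n).u x) = (a : G n).u x
    ring
  · show ((b : G n).v x + (a : G n).v x + (b : G n).u x.1.1 * (a : G n).u x.1.2)
        + (-(b : G n).v x + (b : G n).u x.1.1 * (b : G n).u x.1.2)
        + (((b : G n).u x.1.1 + (a : G n).u x.1.1)) * (-(b : G n).u x.1.2) = (a : G n).v x
    rw [hb x.1.1, hb x.1.2]
    ring

lemma wH_mul_zH (a : Hsub n) : wH a * zH a = a := by
  apply Subtype.ext
  refine G.ext ?_ ?_ <;> funext x
  · show (a : G n).u x + 0 = (a : G n).u x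
    ring
  · show (0 : ℤ) + (a : G n).v x + (a : G n).u x.1.1 * 0 = (a : G n).v x
    ring

lemma wG_mul_zG (b : Gsub n) : wG b * zG b = b := by
  apply Subtype.ext
  refine G.ext ?_ ?_ <;> funext x
  · show (b : G n).u x + 0 = (b : G n).u x
    ring
  · show (0 : ℤ) + (b : G n).v x + (b : G n).u x.1.1 * 0 = (b : G n).v x
    ring

/-- Central element of `Gsub n` with prescribed `v`-coordinates. -/
def zOf (c : PairIdx n → ℤ) (hc : ∀ p : PairIdx n, (p.1.2 : ℕ) + 1 = n → c p = 0) : Gsub n :=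
  ⟨⟨fun _ => 0, c⟩, ⟨fun _ _ => rfl, fun p hp => hc p hp⟩⟩

lemma commutator_eq_vijG {i j : Fin n} (hi : (i : ℕ) + 1 < n) (hj : (j : ℕ) + 1 < n)
    (hij : i < j) :
    uiG i hi * uiG j hj * (uiG i hi)⁻¹ * (uiG j hj)⁻¹ = vijG i j hj := by
  have hij' : (i : ℕ) < (j : ℕ) := hij
  apply Subtype.ext
  show uE i * uE j * (uE i)⁻¹ * (uE j)⁻¹ = vE i j
  refine G.ext ?_ ?_ <;> funext x
  · simp only [G.mul_u, G.inv_u, uE, vE]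
    ring
  · have hlt : (x.1.1 : ℕ) < (x.1.2 : ℕ) := x.2
    simp only [G.mul_v, G.mul_u, G.inv_v, G.inv_u, uE, vE]
    have hCD : (if x.1.1 = j then (1:ℤ) else 0) * (if x.1.2 = i then 1 else 0) = 0 := by
      by_cases h3 : x.1.1 = j
      · have h4 : x.1.2 ≠ i := by
          intro h4
          rw [h3, h4] at hlt
          omega
        simp [h4]
      · simp [h3]
    have hE : (if x.1 = (i, j) then (1:ℤ) else 0)
        = (if x.1.1 = i then (1:ℤ) else 0) * (if x.1.2 = j then 1 else 0) := by
      by_cases h1 : x.1.1 = i <;> by_cases h2 : x.1.2 = j <;>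
        simp [Prod.ext_iff, h1, h2]
    rw [hE]
    linear_combination -hCD

lemma hom_vijG_eq_one (h : Gsub n →* Circle) {i j : Fin n}
    (hi : (i : ℕ) + 1 < n) (hj : (j : ℕ) + 1 < n) (hij : i < j) :
    h (vijG i j hj) = 1 := by
  rw [← commutator_eq_vijG hi hj hij]
  rw [map_mul, map_mul, map_mul, map_inv, map_inv]
  rw [mul_right_comm (h (uiG i hi)) (h (uiG j hj)), mul_inv_cancel, one_mul,
    mul_inv_cancel]

lemma hom_zOf_single_eq_one (h : Gsub n →* Circle) (p : PairIdx n)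
    (hp : (p.1.2 : ℕ) + 1 < n) (m : ℤ) :
    h (zOf (fun q => if q = p then m else 0)
        (fun q hq => by
          by_cases hqp : q = p
          · exact absurd hq (by rw [hqp]; omega)
          · simp [hqp])) = 1 := by
  have hij : p.1.1 < p.1.2 := p.2
  have hi : (p.1.1 : ℕ) + 1 < n := by
    have : (p.1.1 : ℕ) < (p.1.2 : ℕ) := hij
    omega
  induction m using Int.induction_on with
  | zero =>
    have h1 : zOf (n := n) (fun q => if q = p then (0:ℤ) else 0)
        (fun q hq => by simp) = 1 := by
      apply Subtype.ext
      refine G.ext ?_ ?_ <;> funext x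
      · rfl
      · show (if x = p then (0:ℤ) else 0) = 0
        split <;> rfl
      ;
    have := congrArg h h1
    simpa using this
  | succ k ih =>
    have hsplit : zOf (n := n) (fun q => if q = p then ((k:ℤ)+1) else 0)
          (fun q hq => by
            by_cases hqp : q = p
            · exact absurd hq (by rw [hqp]; omega)
            · simp [hqp])
        = zOf (fun q => if q = p then (k:ℤ) else 0)
            (fun q hq => by
            by_cases hqp : q = p
            · exact absurd hq (by rw [hqp]; omega)
            · simp [hqp])
          * vijG p.1.1 p.1.2 hp := by
      apply Subtype.ext
      refine G.ext ?_ ?_ <;> funext x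
      · show (0:ℤ) = 0 + 0
        ring
      · show (if x = p then ((k:ℤ)+1) else 0)
            = (if x = p then (k:ℤ) else 0) + (if x.1 = (p.1.1, p.1.2) then 1 else 0)
              + 0 * 0
        by_cases hx : x = p
        · subst hx
          rw [if_pos rfl, if_pos rfl, if_pos rfl]
          ring
        · rw [if_neg hx, if_neg hx, if_neg (fun hh => hx (Subtype.ext hh))]
          ring
    rw [hsplit, map_mul, ih, hom_vijG_eq_one h hi hp hij, one_mul]
  | pred k ih =>
    have hsplit : zOf (n := n) (fun q => if q = p then (-(k:ℤ)-1) else 0)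
          (fun q hq => by
            by_cases hqp : q = p
            · exact absurd hq (by rw [hqp]; omega)
            · simp [hqp])
        = zOf (fun q => if q = p then (-(k:ℤ)) else 0)
            (fun q hq => by
            by_cases hqp : q = p
            · exact absurd hq (by rw [hqp]; omega)
            · simp [hqp])
          * (vijG p.1.1 p.1.2 hp)⁻¹ := by
      apply Subtype.ext
      refine G.ext ?_ ?_ <;> funext x
      · show (0:ℤ) = 0 + -0
        ring
      · show (if x = p then (-(k:ℤ)-1) else 0)
            = (if x = p then (-(k:ℤ)) else 0)
              + (-(if x.1 = (p.1.1, p.1.2) then (1:ℤ) else 0) + 0 * 0)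
              + 0 * -0
        by_cases hx : x = p
        · subst hx
          rw [if_pos rfl, if_pos rfl, if_pos rfl]
          ring
        · rw [if_neg hx, if_neg hx, if_neg (fun hh => hx (Subtype.ext hh))]
          ring
    rw [hsplit, map_mul, ih, map_inv, hom_vijG_eq_one h hi hp hij, inv_one, one_mul]

lemma hom_eq_one_aux (h : Gsub n →* Circle) :
    ∀ S : Finset (PairIdx n), ∀ r : Gsub n, (∀ i, (r : G n).u i = 0) →
      (∀ p : PairIdx n, (r : G n).v p ≠ 0 → p ∈ S) → h r = 1 := by
  intro S
  induction S using Finset.induction_on with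
  | empty =>
    intro r hu hs
    have hr1 : r = 1 := by
      apply Subtype.ext
      refine G.ext ?_ ?_ <;> funext x
      · exact hu x
      · by_contra hx
        exact absurd (hs x hx) (Finset.notMem_empty x)
    rw [hr1, map_one]
  | @insert p S hpS ih =>
    intro r hu hs
    by_cases hc : (r : G n).v p = 0
    · refine ih r hu (fun q hq => ?_)
      rcases Finset.mem_insert.mp (hs q hq) with h1 | h1
      · exact absurd (h1 ▸ hq) (by simp [hc])
      · exact h1
    · have hp : (p.1.2 : ℕ) + 1 < n := by
        have h2 := (mem_Gsub_iff.mp r.2).2 p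
        have h3 := p.1.2.isLt
        by_contra hcon
        exact hc (h2 (by omega))
      set r' : Gsub n := ⟨⟨fun _ => 0, fun q => if q = p then 0 else (r : G n).v q⟩,
        ⟨fun _ _ => rfl, fun q hq => by
          by_cases hqp : q = p
          · simp [hqp]
          · simpa [hqp] using (mem_Gsub_iff.mp r.2).2 q hq⟩⟩ with hr'def
      have hsplit : r = zOf (fun q => if q = p then (r : G n).v p else 0)
            (fun q hq => by
              by_cases hqp : q = p
              · exact absurd hq (by rw [hqp]; omega)
              · simp [hqp]) * r' := by
        apply Subtype.ext
        refine G.ext ?_ ?_ <;> funext x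
        · show (r : G n).u x = 0 + 0
          rw [hu x]; ring
        · show (r : G n).v x
            = (if x = p then (r : G n).v p else 0)
              + (if x = p then 0 else (r : G n).v x) + 0 * 0
          by_cases hx : x = p
          · subst hx; rw [if_pos rfl, if_pos rfl]; ring
          · rw [if_neg hx, if_neg hx]; ring
      rw [hsplit, map_mul, hom_zOf_single_eq_one h p hp, one_mul]
      refine ih r' (fun _ => rfl) (fun q hq => ?_)
      have hq0 : q ≠ p := by
        intro hx
        exact hq (by simp [hr'def, hx])
      have hqv : (r : G n).v q ≠ 0 := fun h0 => hq (by simp [hr'def, hq0, h0])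
      rcases Finset.mem_insert.mp (hs q hqv) with h1 | h1
      · exact absurd h1 hq0
      · exact h1

lemma hom_u_zero (h : Gsub n →* Circle) (r : Gsub n) (hu : ∀ i, (r : G n).u i = 0) :
    h r = 1 :=
  hom_eq_one_aux h Finset.univ r hu (fun p _ => Finset.mem_univ p)

end Aux

/-- decomposition of `g` along the `w`- and `z`-parts. -/
theorem g_decomposition (n : ℕ) (hn : 2 ≤ n) (lam : Fin n → Circle)
    (σH : Hsub n → Hsub n → Circle) (g : Hsub n → Gsub n → Circle)
    (hnorm : Normalized (show 0 < n by omega) σH g lam) :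
    ∀ (a : Hsub n) (b : Gsub n),
      g a b = g (wH a) (wG b) * g (wH a) (zG b) * g (zH a) (wG b) := by
  obtain ⟨pair, hσ, -⟩ := hnorm
  intro a b
  -- the monoid hom b ↦ g (zH a) b
  let h : Gsub n →* Circle := MonoidHom.mk' (fun b' => g (zH a) b')
    (fun b₁ b₂ => by
      have := pair.g_mul (zH a) b₁ b₂
      rwa [conjH_central_a b₂ (zH a) (fun _ => rfl)] at this)
  have hzz : g (zH a) (zG b) = 1 := hom_u_zero h (zG b) (fun _ => rfl)
  -- step 1 : split a
  have e1 : conjH b (zH a) = zH a := conjH_central_a b (zH a) (fun _ => rfl)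
  have e2 : σH (conjH b (wH a)) (zH a) = σH (wH a) (zH a) := by
    rw [hσ, hσ]
    refine Finset.prod_congr rfl (fun i _ => ?_)
    have : uc ((conjH b (wH a) : Hsub n) : G n) (lastI n (by omega))
        = uc ((wH a : Hsub n) : G n) (lastI n (by omega)) :=
      conjH_u b (wH a) _
    rw [this]
  have h1 : g a b = g (wH a) b * g (zH a) b := by
    conv_lhs => rw [← wH_mul_zH a]
    rw [pair.g_add, e1, e2, mul_inv_cancel, one_mul]
  have h2 : g (wH a) b = g (wH a) (wG b) * g (wH a) (zG b) := by
    conv_lhs => rw [← wG_mul_zG b]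
    rw [pair.g_mul, conjH_central_b (zG b) (wH a) (fun _ => rfl)]
  have h3 : g (zH a) b = g (zH a) (wG b) * g (zH a) (zG b) := by
    conv_lhs => rw [← wG_mul_zG b]
    rw [pair.g_mul, conjH_central_b (zG b) (zH a) (fun _ => rfl)]
  rw [h1, h2, h3, hzz, mul_one]

end FreeNilp
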